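/- Let φ:[0,∞)→[0,∞) be locally integrable, g:[0,∞)→[0,∞) be locally bounded, and let (uⁿ)_{n≥0} be a sequence of measurable, locally bounded, nonnegative functions on [0,∞) such that u^{n+1}_t ≤ g_t + ∫₀ᵗ φ(t−s) uⁿ_s ds for all n≥0 and all t≥0. Then for every T>0, sup_{n≥0} sup_{t∈[0,T]} uⁿ_t < ∞; in fact this quantity is bounded by a constant C_T depending only on T, u⁰, g and φ. -/

import Mathlib

open MeasureTheory Set intervalIntegral Filter

/-- **generalized Grönwall lemma, part (iii).**
Let `φ : [0,∞) → [0,∞)` be locally integrable, `g : [0,∞) → [0,∞)` locally bounded, and `(uⁿ)`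
a sequence of measurable, locally bounded, nonnegative functions with
`u^{n+1} t ≤ g t + ∫₀ᵗ φ(t-s) uⁿ s ds` for all `n, t ≥ 0`.  Then for every `T > 0`,
`sup_n sup_{[0,T]} uⁿ` is bounded by a constant `C_T` depending only on `T`, `u⁰`, `g`, `φ`. -/
theorem stmt3 (φ g : ℝ → ℝ)
    (hφ0 : ∀ t : ℝ, 0 ≤ t → 0 ≤ φ t)
    (hφint : ∀ T : ℝ, 0 ≤ T → IntegrableOn φ (Icc 0 T))
    (hg0 : ∀ t : ℝ, 0 ≤ t → 0 ≤ g t)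
    (hglb : ∀ T : ℝ, 0 ≤ T → ∃ M : ℝ, ∀ t ∈ Icc (0:ℝ) T, g t ≤ M)
    (u : ℕ → ℝ → ℝ)
    (humeas : ∀ n, Measurable (u n))
    (hu0 : ∀ n, ∀ t : ℝ, 0 ≤ t → 0 ≤ u n t)
    (hulb : ∀ n, ∀ T : ℝ, 0 ≤ T → ∃ M : ℝ, ∀ t ∈ Icc (0:ℝ) T, u n t ≤ M)
    (hrec : ∀ n, ∀ t : ℝ, 0 ≤ t → u (n + 1) t ≤ g t + ∫ s in (0:ℝ)..t, φ (t - s) * u n s) :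
    ∀ T : ℝ, 0 < T → ∃ C : ℝ, ∀ n, ∀ t ∈ Icc (0:ℝ) T, u n t ≤ C := by
  intro T hT
  have hT0 : (0:ℝ) ≤ T := hT.le
  obtain ⟨Mg, hMg⟩ := hglb T hT0
  obtain ⟨M0, hM0⟩ := hulb 0 T hT0
  set C : ℝ := max M0 (2 * max Mg 0) + 1 with hCdef
  have hC1 : (1:ℝ) ≤ C := by
    have : (0:ℝ) ≤ max M0 (2 * max Mg 0) := le_trans (by positivity) (le_max_right _ _)
    linarith
  have hC0 : (0:ℝ) ≤ C := le_trans zero_le_one hC1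
  have hCM0 : M0 ≤ C := by
    have := le_max_left M0 (2 * max Mg 0); linarith
  have hCg : ∀ t ∈ Icc (0:ℝ) T, g t ≤ C / 2 := by
    intro t ht
    have h1 : g t ≤ Mg := hMg t ht
    have h2 : Mg ≤ max Mg 0 := le_max_left _ _
    have h3 : 2 * max Mg 0 ≤ max M0 (2 * max Mg 0) := le_max_right _ _
    simp only [hCdef]; linarith
  -- measurability of φ on Ioc 0 T
  have hφaesm : AEStronglyMeasurable φ (volume.restrict (Ioc (0:ℝ) T)) :=
    (hφint T hT0).aestronglyMeasurable.mono_measure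
      (Measure.restrict_mono Ioc_subset_Icc_self le_rfl)
  -- choose k with ∫ r in 0..T, exp(-k r) φ r ≤ 1/2
  have hJ : Tendsto (fun k : ℕ => ∫ r in Ioc (0:ℝ) T, Real.exp (-(k:ℝ) * r) * φ r)
      atTop (nhds 0) := by
    have main := tendsto_integral_of_dominated_convergence
      (μ := volume.restrict (Ioc (0:ℝ) T))
      (F := fun (k : ℕ) (r : ℝ) => Real.exp (-(k:ℝ) * r) * φ r) (f := fun _ => (0:ℝ))
      (bound := fun r => |φ r|) ?_ ?_ ?_ ?_
    · simpa using main
    · intro k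
      exact ((Real.continuous_exp.comp (continuous_const.mul continuous_id)).aestronglyMeasurable).mul hφaesm
    · exact ((hφint T hT0).mono_set Ioc_subset_Icc_self).abs
    · intro k
      filter_upwards [ae_restrict_mem measurableSet_Ioc] with r hr
      have hr0 : 0 < r := hr.1
      have he : Real.exp (-(k:ℝ) * r) ≤ 1 := by
        apply Real.exp_le_one_iff.2
        nlinarith [Nat.cast_nonneg (α := ℝ) k]
      have he0 : 0 < Real.exp (-(k:ℝ) * r) := Real.exp_pos _
      rw [Real.norm_eq_abs, abs_mul, abs_of_pos he0]
      calc Real.exp (-(k:ℝ) * r) * |φ r| ≤ 1 * |φ r| := by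
            apply mul_le_mul_of_nonneg_right he (abs_nonneg _)
        _ = |φ r| := one_mul _
    · filter_upwards [ae_restrict_mem measurableSet_Ioc] with r hr
      have hr0 : 0 < r := hr.1
      have h1 : Tendsto (fun k : ℕ => -(k:ℝ) * r) atTop atBot := by
        have h := (tendsto_natCast_atTop_atTop (R := ℝ)).atTop_mul_const hr0
        simpa [neg_mul] using tendsto_neg_atBot_iff.2 h
      have h2 : Tendsto (fun k : ℕ => Real.exp (-(k:ℝ) * r)) atTop (nhds 0) :=
        Real.tendsto_exp_atBot.comp h1
      simpa using h2.mul_const (φ r)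
  obtain ⟨k, hk⟩ : ∃ k : ℕ, ∫ r in Ioc (0:ℝ) T, Real.exp (-(k:ℝ) * r) * φ r ≤ 1/2 := by
    have := hJ.eventually (eventually_lt_nhds (show (0:ℝ) < 1/2 by norm_num))
    obtain ⟨k, hk⟩ := this.exists
    exact ⟨k, hk.le⟩
  -- main induction: u n t ≤ C * exp(k t) on [0,T]
  have key : ∀ n, ∀ t ∈ Icc (0:ℝ) T, u n t ≤ C * Real.exp ((k:ℝ) * t) := by
    intro n
    induction n with
    | zero =>
      intro t ht
      have h1 : u 0 t ≤ M0 := hM0 t ht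
      have h2 : (1:ℝ) ≤ Real.exp ((k:ℝ) * t) :=
        Real.one_le_exp (mul_nonneg (Nat.cast_nonneg k) ht.1)
      nlinarith
    | succ n ih =>
      intro t ht
      obtain ⟨ht0, htT⟩ := ht
      have hφIt : IntervalIntegrable φ volume 0 t := by
        rw [intervalIntegrable_iff_integrableOn_Ioc_of_le ht0]
        exact ((hφint t ht0).mono_set Ioc_subset_Icc_self)
      have hφIts : IntervalIntegrable (fun s => φ (t - s)) volume 0 t := by
        have := hφIt.comp_sub_left t
        simpa using this.symm
      -- integrability of φ(t-s) * u n s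
      obtain ⟨Mn, hMn⟩ := hulb n T hT0
      have hInt1 : IntervalIntegrable (fun s => φ (t - s) * u n s) volume 0 t := by
        rw [intervalIntegrable_iff_integrableOn_Ioc_of_le ht0]
        have hg : IntegrableOn (fun s => φ (t - s)) (Ioc 0 t) volume := by
          rw [← intervalIntegrable_iff_integrableOn_Ioc_of_le ht0]; exact hφIts
        have : Integrable (fun s => u n s * φ (t - s)) (volume.restrict (Ioc 0 t)) := by
          apply hg.bdd_mul (c := max Mn 0) ((humeas n).aestronglyMeasurable.restrict)
          filter_upwards [ae_restrict_mem measurableSet_Ioc] with s hs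
          rw [Real.norm_eq_abs, abs_of_nonneg (hu0 n s hs.1.le)]
          exact le_max_of_le_left (hMn s ⟨hs.1.le, hs.2.trans htT⟩)
        exact this.congr (Filter.Eventually.of_forall fun s => mul_comm _ _)
      have hInt2 : IntervalIntegrable (fun s => φ (t - s) * (C * Real.exp ((k:ℝ) * s)))
          volume 0 t := by
        have hcont : ContinuousOn (fun s => C * Real.exp ((k:ℝ) * s)) (uIcc 0 t) :=
          (continuous_const.mul (Real.continuous_exp.comp (continuous_const.mul
            continuous_id))).continuousOn
        simpa [mul_comm] using hφIts.continuousOn_mul hcont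
      -- compare integrals
      have hmono : (∫ s in (0:ℝ)..t, φ (t - s) * u n s)
          ≤ ∫ s in (0:ℝ)..t, φ (t - s) * (C * Real.exp ((k:ℝ) * s)) := by
        apply integral_mono_on ht0 hInt1 hInt2
        intro s hs
        have hφnn : 0 ≤ φ (t - s) := hφ0 _ (by linarith [hs.1, hs.2])
        exact mul_le_mul_of_nonneg_left (ih s ⟨hs.1, hs.2.trans htT⟩) hφnn
      -- substitution
      have hsub : (∫ s in (0:ℝ)..t, φ (t - s) * (C * Real.exp ((k:ℝ) * s)))
          = C * Real.exp ((k:ℝ) * t) * ∫ r in (0:ℝ)..t, Real.exp (-(k:ℝ) * r) * φ r := by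
        have h1 : (∫ s in (0:ℝ)..t, φ (t - s) * (C * Real.exp ((k:ℝ) * s)))
            = ∫ s in (0:ℝ)..t, (fun r => φ r * (C * Real.exp ((k:ℝ) * (t - r)))) (t - s) := by
          apply intervalIntegral.integral_congr
          intro s _
          simp [sub_sub_cancel]
        rw [h1, intervalIntegral.integral_comp_sub_left
          (fun r => φ r * (C * Real.exp ((k:ℝ) * (t - r)))) t]
        simp only [sub_zero, sub_self]
        rw [show (∫ r in (0:ℝ)..t, φ r * (C * Real.exp ((k:ℝ) * (t - r))))
            = ∫ r in (0:ℝ)..t, (C * Real.exp ((k:ℝ) * t)) * (Real.exp (-(k:ℝ) * r) * φ r) from ?_]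
        · exact intervalIntegral.integral_const_mul _ _
        · apply intervalIntegral.integral_congr
          intro r _
          have he : Real.exp ((k:ℝ) * (t - r)) = Real.exp ((k:ℝ) * t) * Real.exp (-(k:ℝ) * r) := by
            rw [← Real.exp_add]; ring_nf
          simp only [he]
          ring
      -- bound the kernel integral
      have hkern : (∫ r in (0:ℝ)..t, Real.exp (-(k:ℝ) * r) * φ r) ≤ 1/2 := by
        rw [intervalIntegral.integral_of_le ht0]
        refine le_trans ?_ hk
        apply setIntegral_mono_set
        · apply Integrable.mono_measure _ (Measure.restrict_mono (Ioc_subset_Icc_self) le_rfl)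
          apply Integrable.bdd_mul (c := 1) ((hφint T hT0).mono_measure le_rfl)
            ((Real.continuous_exp.comp (continuous_const.mul continuous_id)).aestronglyMeasurable.restrict)
          filter_upwards [ae_restrict_mem measurableSet_Icc] with r hr
          simp only [Function.comp_apply, Real.norm_eq_abs, id_eq, Pi.mul_apply]
          rw [abs_of_pos (Real.exp_pos _)]
          apply Real.exp_le_one_iff.2
          nlinarith [Nat.cast_nonneg (α := ℝ) k, hr.1]
        · filter_upwards [ae_restrict_mem measurableSet_Ioc] with r hr
          exact mul_nonneg (Real.exp_pos _).le (hφ0 r hr.1.le)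
        · exact Filter.Eventually.of_forall fun r hr => ⟨hr.1, hr.2.trans htT⟩
      -- conclude
      have hexp1 : (1:ℝ) ≤ Real.exp ((k:ℝ) * t) :=
        Real.one_le_exp (mul_nonneg (Nat.cast_nonneg k) ht0)
      calc u (n + 1) t ≤ g t + ∫ s in (0:ℝ)..t, φ (t - s) * u n s := hrec n t ht0
        _ ≤ C / 2 + C * Real.exp ((k:ℝ) * t) * (1/2) := by
            have := hmono.trans_eq hsub
            have h2 : C * Real.exp ((k:ℝ) * t) * (∫ r in (0:ℝ)..t, Real.exp (-(k:ℝ) * r) * φ r)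
                ≤ C * Real.exp ((k:ℝ) * t) * (1/2) :=
              mul_le_mul_of_nonneg_left hkern (by positivity)
            have hgt := hCg t ⟨ht0, htT⟩
            exact add_le_add hgt (this.trans h2)
        _ ≤ C * Real.exp ((k:ℝ) * t) := by nlinarith [mul_nonneg hC0 (sub_nonneg.2 hexp1)]
  exact ⟨C * Real.exp ((k:ℝ) * T), fun n t ht =>
    (key n t ht).trans (mul_le_mul_of_nonneg_left
      (Real.exp_le_exp.2 (mul_le_mul_of_nonneg_left ht.2 (Nat.cast_nonneg k))) hC0)⟩
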